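/- Let a(r) = (1/2)√((r−3)(r+1)), b(r) = √((r−3)(r+1))/(r−1), c(r) = √((r²−1)/2), h(r) = (r−1)/√((r−3)(r+1)) be the 𝔹₈ metric functions on (3, ∞), and define u₁(r) = −2(5r³−9r²+15r−3)/((r−1)³(r+1)⁴), u₂(r) = (r−3)(5r²−2r+1)/((r−1)³(r+1)⁴), u₃(r) = −2(r−3)/((r−1)²(r+1)⁴). Then for all r > 3 the harmonic 4-form equations (55) with the opposite duality hold: −(1/h)(c⁴u₁)' − 2bc²u₂ + 4ac²u₃ = 0, −(1/h)(a²c²u₂)' − a²b u₁ + bc²u₂ + 2ac²u₃ = 0, and −(1/h)(abc²u₃)' + a²b u₁ + bc²u₂ = 0, primes denoting d/dr. (These u_i define the second, self-dual L²-normalisable harmonic 4-form of the Spin(7) manifold 𝔹₈.) -/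

import Mathlib

set_option maxHeartbeats 1600000 in
/-- The second, self-dual `L²`-normalisable harmonic 4-form of the Spin(7)
manifold `𝔹₈`: with the `𝔹₈` metric functions
`a = (1/2)√((r-3)(r+1))`, `b = √((r-3)(r+1))/(r-1)`, `c = √((r²-1)/2)`,
`h = (r-1)/√((r-3)(r+1))` on `(3, ∞)`, the functions
`u₁ = -2(5r³-9r²+15r-3)/((r-1)³(r+1)⁴)`,
`u₂ = (r-3)(5r²-2r+1)/((r-1)³(r+1)⁴)`,
`u₃ = -2(r-3)/((r-1)²(r+1)⁴)` satisfy the harmonic 4-form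
equations (55) with the opposite duality:
`-(1/h)(c⁴u₁)' - 2bc²u₂ + 4ac²u₃ = 0`,
`-(1/h)(a²c²u₂)' - a²b u₁ + bc²u₂ + 2ac²u₃ = 0`,
`-(1/h)(abc²u₃)' + a²b u₁ + bc²u₂ = 0`. -/
theorem B8_selfdual_harmonic_four_form
    (a b c h u₁ u₂ u₃ : ℝ → ℝ)
    (hadef : a = fun r => (1 / 2) * Real.sqrt ((r - 3) * (r + 1)))
    (hbdef : b = fun r => Real.sqrt ((r - 3) * (r + 1)) / (r - 1))
    (hcdef : c = fun r => Real.sqrt ((r ^ 2 - 1) / 2))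
    (hhdef : h = fun r => (r - 1) / Real.sqrt ((r - 3) * (r + 1)))
    (hu₁ : u₁ = fun r =>
      -2 * (5 * r ^ 3 - 9 * r ^ 2 + 15 * r - 3) / ((r - 1) ^ 3 * (r + 1) ^ 4))
    (hu₂ : u₂ = fun r =>
      (r - 3) * (5 * r ^ 2 - 2 * r + 1) / ((r - 1) ^ 3 * (r + 1) ^ 4))
    (hu₃ : u₃ = fun r =>
      -2 * (r - 3) / ((r - 1) ^ 2 * (r + 1) ^ 4)) :
    ∀ r ∈ Set.Ioi (3 : ℝ),
      -((1 / h r) * deriv (fun s => (c s) ^ 4 * u₁ s) r)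
          - 2 * b r * (c r) ^ 2 * u₂ r + 4 * a r * (c r) ^ 2 * u₃ r = 0 ∧
      -((1 / h r) * deriv (fun s => (a s) ^ 2 * (c s) ^ 2 * u₂ s) r)
          - (a r) ^ 2 * b r * u₁ r + b r * (c r) ^ 2 * u₂ r
          + 2 * a r * (c r) ^ 2 * u₃ r = 0 ∧
      -((1 / h r) * deriv (fun s => a s * b s * (c s) ^ 2 * u₃ s) r)
          + (a r) ^ 2 * b r * u₁ r + b r * (c r) ^ 2 * u₂ r = 0 := by
  intro r hr
  have hr3 : (3:ℝ) < r := hr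
  have h1 : (0:ℝ) < r - 3 := by linarith
  have h2 : (0:ℝ) < r + 1 := by linarith
  have h3 : (0:ℝ) < r - 1 := by linarith
  have hprod : (0:ℝ) < (r - 3) * (r + 1) := mul_pos h1 h2
  have hs0 : 0 < Real.sqrt ((r - 3) * (r + 1)) := Real.sqrt_pos.mpr hprod
  have hs2 : Real.sqrt ((r - 3) * (r + 1)) ^ 2 = (r - 3) * (r + 1) :=
    Real.sq_sqrt hprod.le
  have hc2 : c r ^ 2 = (r ^ 2 - 1) / 2 := by
    rw [hcdef]
    exact Real.sq_sqrt (by nlinarith)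
  have hmem : Set.Ioi (3:ℝ) ∈ nhds r := isOpen_Ioi.mem_nhds hr
  -- derivative 1
  have key1 : deriv (fun s => c s ^ 4 * u₁ s) r =
      ((-(15 * r ^ 2 - 18 * r + 15)) * (2 * (r - 1) * (r + 1) ^ 2)
        - (-(5 * r ^ 3 - 9 * r ^ 2 + 15 * r - 3)) *
          (2 * (r + 1) ^ 2 + 2 * (r - 1) * (2 * (r + 1))))
        / (2 * (r - 1) * (r + 1) ^ 2) ^ 2 := by
    have hev : (fun s => c s ^ 4 * u₁ s) =ᶠ[nhds r]
        (fun s => -(5 * s ^ 3 - 9 * s ^ 2 + 15 * s - 3) /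
          (2 * (s - 1) * (s + 1) ^ 2)) := by
      filter_upwards [hmem] with x hx
      have hx3 : (3:ℝ) < x := hx
      have hxc : Real.sqrt ((x ^ 2 - 1) / 2) ^ 2 = (x ^ 2 - 1) / 2 :=
        Real.sq_sqrt (by nlinarith)
      rw [hcdef, hu₁]
      have h4 : Real.sqrt ((x ^ 2 - 1) / 2) ^ 4
          = ((x ^ 2 - 1) / 2) ^ 2 := by
        rw [show (4:ℕ) = 2 * 2 from rfl, pow_mul, hxc]
      simp only
      rw [h4]
      have e1 : x - 1 ≠ 0 := by intro hc; linarith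
      have e2 : x + 1 ≠ 0 := by intro hc; linarith
      field_simp
      ring
    rw [hev.deriv_eq]
    have hnum : HasDerivAt (fun s : ℝ => -(5 * s ^ 3 - 9 * s ^ 2 + 15 * s - 3))
        (-(15 * r ^ 2 - 18 * r + 15)) r := by
      have H := ((((hasDerivAt_pow 3 r).const_mul (5:ℝ)).sub
        ((hasDerivAt_pow 2 r).const_mul (9:ℝ))).add
        ((hasDerivAt_id r).const_mul (15:ℝ))).sub_const (3:ℝ) |>.neg
      refine H.congr_deriv ?_
      first
      | (simp only [id_eq]; push_cast; ring)
      | (push_cast; ring)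
      | ring
    have hden : HasDerivAt (fun s : ℝ => 2 * (s - 1) * (s + 1) ^ 2)
        (2 * (r + 1) ^ 2 + 2 * (r - 1) * (2 * (r + 1))) r := by
      have hA : HasDerivAt (fun s : ℝ => 2 * (s - 1)) 2 r := by
        simpa using ((hasDerivAt_id r).sub_const (1:ℝ)).const_mul (2:ℝ)
      have hB : HasDerivAt (fun s : ℝ => (s + 1) ^ 2) (2 * (r + 1)) r := by
        have H := ((hasDerivAt_id r).add_const (1:ℝ)).pow 2
        refine H.congr_deriv ?_
        first
        | (simp only [id_eq]; push_cast; ring)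
        | (push_cast; ring)
        | ring
      exact hA.mul hB
    have hd0 : (2 : ℝ) * (r - 1) * (r + 1) ^ 2 ≠ 0 :=
      (mul_pos (mul_pos two_pos h3) (pow_pos h2 2)).ne'
    exact (hnum.div hden hd0).deriv
  -- derivative 2
  have key2 : deriv (fun s => a s ^ 2 * c s ^ 2 * u₂ s) r =
      (((2 * (r - 3)) * (5 * r ^ 2 - 2 * r + 1)
          + (r - 3) ^ 2 * (10 * r - 2)) * (8 * (r - 1) ^ 2 * (r + 1) ^ 2)
        - (r - 3) ^ 2 * (5 * r ^ 2 - 2 * r + 1) *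
          (16 * (r - 1) * (r + 1) ^ 2 + 8 * (r - 1) ^ 2 * (2 * (r + 1))))
        / (8 * (r - 1) ^ 2 * (r + 1) ^ 2) ^ 2 := by
    have hev : (fun s => a s ^ 2 * c s ^ 2 * u₂ s) =ᶠ[nhds r]
        (fun s => (s - 3) ^ 2 * (5 * s ^ 2 - 2 * s + 1) /
          (8 * (s - 1) ^ 2 * (s + 1) ^ 2)) := by
      filter_upwards [hmem] with x hx
      have hx3 : (3:ℝ) < x := hx
      have hxc : Real.sqrt ((x ^ 2 - 1) / 2) ^ 2 = (x ^ 2 - 1) / 2 :=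
        Real.sq_sqrt (by nlinarith)
      have hxa : Real.sqrt ((x - 3) * (x + 1)) ^ 2 = (x - 3) * (x + 1) :=
        Real.sq_sqrt (by nlinarith)
      rw [hadef, hcdef, hu₂]
      simp only
      rw [mul_pow, hxa, hxc]
      have e1 : x - 1 ≠ 0 := by intro hc; linarith
      have e2 : x + 1 ≠ 0 := by intro hc; linarith
      field_simp
      ring
    rw [hev.deriv_eq]
    have hnum : HasDerivAt (fun s : ℝ => (s - 3) ^ 2 * (5 * s ^ 2 - 2 * s + 1))
        ((2 * (r - 3)) * (5 * r ^ 2 - 2 * r + 1) + (r - 3) ^ 2 * (10 * r - 2)) r := by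
      have hA : HasDerivAt (fun s : ℝ => (s - 3) ^ 2) (2 * (r - 3)) r := by
        have H := ((hasDerivAt_id r).sub_const (3:ℝ)).pow 2
        refine H.congr_deriv ?_
        first
        | (simp only [id_eq]; push_cast; ring)
        | (push_cast; ring)
        | ring
      have hB : HasDerivAt (fun s : ℝ => 5 * s ^ 2 - 2 * s + 1) (10 * r - 2) r := by
        have H := (((hasDerivAt_pow 2 r).const_mul (5:ℝ)).sub
          ((hasDerivAt_id r).const_mul (2:ℝ))).add_const (1:ℝ)
        refine H.congr_deriv ?_
        first
        | (simp only [id_eq]; push_cast; ring)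
        | (push_cast; ring)
        | ring
      exact hA.mul hB
    have hden : HasDerivAt (fun s : ℝ => 8 * (s - 1) ^ 2 * (s + 1) ^ 2)
        (16 * (r - 1) * (r + 1) ^ 2 + 8 * (r - 1) ^ 2 * (2 * (r + 1))) r := by
      have hA : HasDerivAt (fun s : ℝ => 8 * (s - 1) ^ 2) (16 * (r - 1)) r := by
        have H := (((hasDerivAt_id r).sub_const (1:ℝ)).pow 2).const_mul (8:ℝ)
        refine H.congr_deriv ?_
        first
        | (simp only [id_eq]; push_cast; ring)
        | (push_cast; ring)
        | ring
      have hB : HasDerivAt (fun s : ℝ => (s + 1) ^ 2) (2 * (r + 1)) r := by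
        have H := ((hasDerivAt_id r).add_const (1:ℝ)).pow 2
        refine H.congr_deriv ?_
        first
        | (simp only [id_eq]; push_cast; ring)
        | (push_cast; ring)
        | ring
      exact hA.mul hB
    have hd0 : (8 : ℝ) * (r - 1) ^ 2 * (r + 1) ^ 2 ≠ 0 :=
      (mul_pos (mul_pos (by norm_num) (pow_pos h3 2)) (pow_pos h2 2)).ne'
    exact (hnum.div hden hd0).deriv
  -- derivative 3
  have key3 : deriv (fun s => a s * b s * c s ^ 2 * u₃ s) r =
      ((-(2 * (r - 3))) * (2 * (r - 1) ^ 2 * (r + 1) ^ 2)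
        - (-(r - 3) ^ 2) * (4 * (r - 1) * (r + 1) ^ 2 + 2 * (r - 1) ^ 2 * (2 * (r + 1))))
        / (2 * (r - 1) ^ 2 * (r + 1) ^ 2) ^ 2 := by
    have hev : (fun s => a s * b s * c s ^ 2 * u₃ s) =ᶠ[nhds r]
        (fun s => -(s - 3) ^ 2 / (2 * (s - 1) ^ 2 * (s + 1) ^ 2)) := by
      filter_upwards [hmem] with x hx
      have hx3 : (3:ℝ) < x := hx
      have hxc : Real.sqrt ((x ^ 2 - 1) / 2) ^ 2 = (x ^ 2 - 1) / 2 :=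
        Real.sq_sqrt (by nlinarith)
      have hxa : Real.sqrt ((x - 3) * (x + 1)) ^ 2 = (x - 3) * (x + 1) :=
        Real.sq_sqrt (by nlinarith)
      rw [hadef, hbdef, hcdef, hu₃]
      simp only
      rw [hxc]
      have hab : 1 / 2 * Real.sqrt ((x - 3) * (x + 1)) *
          (Real.sqrt ((x - 3) * (x + 1)) / (x - 1))
          = (x - 3) * (x + 1) / (2 * (x - 1)) := by
        have hx1 : x - 1 ≠ 0 := by intro hc; linarith [hx3]
        have e3 : Real.sqrt (x - 3) ^ 2 = x - 3 := Real.sq_sqrt (by linarith)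
        have e4 : Real.sqrt (x + 1) ^ 2 = x + 1 := Real.sq_sqrt (by linarith)
        field_simp
        nlinarith [e3, e4, hxa]
      rw [hab]
      have e1 : x - 1 ≠ 0 := by intro hc; linarith
      have e2 : x + 1 ≠ 0 := by intro hc; linarith
      field_simp
      ring
    rw [hev.deriv_eq]
    have hnum : HasDerivAt (fun s : ℝ => -(s - 3) ^ 2) (-(2 * (r - 3))) r := by
      have H := (((hasDerivAt_id r).sub_const (3:ℝ)).pow 2).neg
      refine H.congr_deriv ?_
      first
      | (simp only [id_eq]; push_cast; ring)
      | (push_cast; ring)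
      | ring
    have hden : HasDerivAt (fun s : ℝ => 2 * (s - 1) ^ 2 * (s + 1) ^ 2)
        (4 * (r - 1) * (r + 1) ^ 2 + 2 * (r - 1) ^ 2 * (2 * (r + 1))) r := by
      have hA : HasDerivAt (fun s : ℝ => 2 * (s - 1) ^ 2) (4 * (r - 1)) r := by
        have H := (((hasDerivAt_id r).sub_const (1:ℝ)).pow 2).const_mul (2:ℝ)
        refine H.congr_deriv ?_
        first
        | (simp only [id_eq]; push_cast; ring)
        | (push_cast; ring)
        | ring
      have hB : HasDerivAt (fun s : ℝ => (s + 1) ^ 2) (2 * (r + 1)) r := by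
        have H := ((hasDerivAt_id r).add_const (1:ℝ)).pow 2
        refine H.congr_deriv ?_
        first
        | (simp only [id_eq]; push_cast; ring)
        | (push_cast; ring)
        | ring
      exact hA.mul hB
    have hd0 : (2 : ℝ) * (r - 1) ^ 2 * (r + 1) ^ 2 ≠ 0 :=
      (mul_pos (mul_pos two_pos (pow_pos h3 2)) (pow_pos h2 2)).ne'
    exact (hnum.div hden hd0).deriv
  set s := Real.sqrt ((r - 3) * (r + 1)) with hsdef
  have ha : a r = s / 2 := by rw [hadef]; ring
  have ha2 : a r ^ 2 = (r - 3) * (r + 1) / 4 := by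
    rw [hadef]
    simp only
    rw [mul_pow, hs2]
    ring
  have hb : b r = s / (r - 1) := by rw [hbdef]
  have hh : h r = (r - 1) / s := by rw [hhdef]
  have hs0' : s ≠ 0 := hs0.ne'
  have h3' : r - 1 ≠ 0 := h3.ne'
  have h2' : r + 1 ≠ 0 := h2.ne'
  have h1' : r - 3 ≠ 0 := h1.ne'
  refine ⟨?_, ?_, ?_⟩
  · rw [key1, hb, hh, hc2, ha, hu₂, hu₃]
    simp only
    field_simp
    ring
  · rw [key2, ha2, hb, hh, hc2, ha, hu₁, hu₂, hu₃]
    simp only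
    field_simp
    ring
  · rw [key3, ha2, hb, hh, hc2, hu₁, hu₂]
    simp only
    field_simp
    ring
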